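/- In the n-bidder instance where each bidder i has signals {0,1} and valuation v_i(s) = 1 if s_j = 1 for all j ≠ i and 0 otherwise, any feasible allocation x (with x_i(s) ∈ [0,1], Σ_i x_i(s) ≤ 1) that is monotone in each bidder's own signal satisfies: Σ_i x_i(e_{-i}) ≤ 1, where e_{-i} is the profile with s_i = 0 and s_j = 1 for all j ≠ i. Consequently, for the prior where s_i = 1 independently with probability ε, the expected welfare of any monotone allocation is at most ε^{n-1}, while the optimal expected welfare exceeds n·ε^{n-1}(1−ε). -/

import Mathlib

/-- Randomized impossibility without single-crossing: `n` bidders, signals in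
`{0,1}`, `v_i(s) = 1` iff all other signals are `1`. Any feasible allocation
monotone in each own signal satisfies `Σ_i x_i(e_{-i}) ≤ 1` (where `e_{-i}` has
`s_i = 0` and all other signals `1`); consequently, under the i.i.d. prior
`Pr[s_i = 1] = ε`, the expected welfare is at most `ε^(n-1)` while the optimal
expected welfare `ε^n + n·ε^(n-1)·(1-ε)` exceeds `n·ε^(n-1)·(1-ε)`. -/
theorem randomized_impossibility_no_sc
    (n : ℕ) (hn : 2 ≤ n) (ε : ℝ) (hε : 0 < ε) (hε1 : ε < 1)
    (v : Fin n → (Fin n → Bool) → ℝ)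
    (hv : ∀ i s, v i s = if ∀ j, j ≠ i → s j = true then 1 else 0)
    (x : (Fin n → Bool) → Fin n → ℝ)
    (hx0 : ∀ s i, 0 ≤ x s i) (hx1 : ∀ s i, x s i ≤ 1)
    (hfeas : ∀ s, ∑ i, x s i ≤ 1)
    (hmono : ∀ s i, x (Function.update s i false) i ≤ x (Function.update s i true) i) :
    (∑ i, x (Function.update (fun _ => true) i false) i ≤ 1) ∧
    (∑ s : Fin n → Bool,
        (∏ j, if s j then ε else 1 - ε) * ∑ i, x s i * v i s ≤ ε ^ (n - 1)) ∧
    ((n : ℝ) * ε ^ (n - 1) * (1 - ε) < ε ^ n + n * ε ^ (n - 1) * (1 - ε)) := by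
  set a : Fin n → Bool := fun _ => true with ha
  have hupd : ∀ i : Fin n, Function.update a i true = a := by
    intro i; funext j; by_cases hj : j = i <;> simp [Function.update, hj, ha]
  have hkey : ∀ i, x (Function.update a i false) i ≤ x a i := by
    intro i
    have h := hmono a i
    rwa [hupd i] at h
  have hB : ∑ i, x (Function.update a i false) i ≤ 1 :=
    le_trans (Finset.sum_le_sum fun i _ => hkey i) (hfeas a)
  refine ⟨hB, ?_, ?_⟩
  · -- welfare bound
    set P : (Fin n → Bool) → ℝ := fun s => ∏ j, if s j then ε else 1 - ε with hP
    have hPa : P a = ε ^ n := by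
      simp [hP, ha, Finset.prod_const, Finset.card_univ]
    have hPb : ∀ i : Fin n, P (Function.update a i false) = (1 - ε) * ε ^ (n - 1) := by
      intro i
      show (∏ j, if Function.update a i false j then ε else 1 - ε) = (1 - ε) * ε ^ (n - 1)
      rw [Fintype.prod_eq_mul_prod_compl i]
      have h1 : (if Function.update a i false i then ε else 1 - ε) = 1 - ε := by
        simp [Function.update]
      rw [h1]
      congr 1
      rw [Finset.prod_congr rfl (fun j hj => ?_), Finset.prod_const,
        Finset.card_compl, Fintype.card_fin, Finset.card_singleton]
      have hji : j ≠ i := by simpa using hj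
      simp [Function.update, hji, ha]
    have hva : ∀ i, v i a = 1 := by
      intro i; rw [hv]; simp [ha]
    have hvb : ∀ i, v i (Function.update a i false) = 1 := by
      intro i; rw [hv]
      have : ∀ j, j ≠ i → Function.update a i false j = true := by
        intro j hj; simp [Function.update, hj, ha]
      rw [if_pos this]
    have hswap : ∑ s : Fin n → Bool, P s * ∑ i, x s i * v i s
        = ∑ i, ∑ s : Fin n → Bool, P s * (x s i * v i s) := by
      rw [Finset.sum_comm]
      exact Finset.sum_congr rfl fun s _ => Finset.mul_sum _ _ _
    rw [hswap]
    have hinner : ∀ i : Fin n, ∑ s : Fin n → Bool, P s * (x s i * v i s)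
        = P a * x a i + P (Function.update a i false) * x (Function.update a i false) i := by
      intro i
      have hne : a ≠ Function.update a i false := by
        intro h
        have := congrFun h i
        simp [ha, Function.update] at this
      have hsub : ∑ s ∈ ({a, Function.update a i false} : Finset (Fin n → Bool)),
          P s * (x s i * v i s) = ∑ s : Fin n → Bool, P s * (x s i * v i s) := by
        apply Finset.sum_subset (Finset.subset_univ _)
        intro s _ hs
        simp only [Finset.mem_insert, Finset.mem_singleton, not_or] at hs
        have hvz : v i s = 0 := by
          rw [hv]
          rw [if_neg]
          intro hall
          by_cases hsi : s i = true
          · apply hs.1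
            funext j
            by_cases hj : j = i
            · rw [hj]; exact hsi.symm ▸ rfl
            · exact (hall j hj).symm ▸ rfl
          · apply hs.2
            funext j
            by_cases hj : j = i
            · subst hj; simp [Function.update]; simpa using hsi
            · simp [Function.update, hj, hall j hj, ha]
        simp [hvz]
      rw [← hsub, Finset.sum_pair hne, hva i, hvb i]
      ring
    calc ∑ i, ∑ s : Fin n → Bool, P s * (x s i * v i s)
        = ∑ i, (ε ^ n * x a i + (1 - ε) * ε ^ (n - 1) * x (Function.update a i false) i) := by
          refine Finset.sum_congr rfl fun i _ => ?_
          rw [hinner i, hPa, hPb i]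
      _ = ε ^ n * (∑ i, x a i) + (1 - ε) * ε ^ (n - 1) * (∑ i, x (Function.update a i false) i) := by
          rw [Finset.sum_add_distrib, Finset.mul_sum, Finset.mul_sum]
      _ ≤ ε ^ n * 1 + (1 - ε) * ε ^ (n - 1) * 1 := by
          have h1 : 0 ≤ ε ^ n := le_of_lt (pow_pos hε n)
          have h2 : (0:ℝ) ≤ (1 - ε) * ε ^ (n - 1) :=
            mul_nonneg (by linarith) (le_of_lt (pow_pos hε _))
          gcongr
          exact hfeas a
      _ = ε ^ (n - 1) := by
          have : ε ^ n = ε ^ (n - 1) * ε := by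
            rw [← pow_succ]
            congr 1
            omega
          rw [this]; ring
  · have := pow_pos hε n
    linarith
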